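/- Let c be a nonzero integer. Then X, Y ∈ M₂(ℤ) satisfy X⁴ + Y⁴ = c⁴·I and XY ≠ YX if and only if X = [[t₁, t₂],[t₃, −t₁]] and Y = [[s₁, s₂],[s₃, −s₁]] for some integers t₁, t₂, t₃, s₁, s₂, s₃ such that (t₁² + t₂t₃)² + (s₁² + s₂s₃)² = c⁴ and the vectors (t₁, t₂, t₃) and (s₁, s₂, s₃) in ℚ³ are linearly independent over ℚ. -/

import Mathlib

lemma coprime_two_of_odd {x : ℤ} (h : x % 2 = 1) : IsCoprime (2:ℤ) x :=
  ⟨-(x/2), 1, by omega⟩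

lemma auxD (a γ δ : ℤ) (hcop : IsCoprime δ γ) (hδ : δ % 2 = 1) (hγ : γ ≠ 0)
    (h : δ^4 + 4*γ^4 = a^2) :
    ∃ p q e : ℤ, p ≠ 0 ∧ q ≠ 0 ∧ e ≠ 0 ∧ p^4 - q^4 = e^2 ∧ p.natAbs^4 < a.natAbs := by
  have hδ0 : δ ≠ 0 := by omega
  have ha0 : a ≠ 0 := by
    rintro rfl
    have h1 : (0:ℤ) < δ^4 + 4*γ^4 := by positivity
    simp at h
    linarith
  have hPT : PythagoreanTriple (δ^2) (2*γ^2) |a| := by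
    have habs : |a| * |a| = a * a := abs_mul_abs_self a
    unfold PythagoreanTriple
    linear_combination h - habs
  have hgcd : Int.gcd (δ^2) (2*γ^2) = 1 := by
    apply Int.isCoprime_iff_gcd_eq_one.mp
    exact (((coprime_two_of_odd hδ).symm).mul_right (hcop.pow_right)).pow_left
  have hpar : δ^2 % 2 = 1 := by rw [sq, Int.mul_emod, hδ]; decide
  have hapos : 0 < |a| := abs_pos.mpr ha0
  obtain ⟨m, n, hm1, hm2, hm3, hm4, _, hm6⟩ := hPT.coprime_classification' hgcd hpar hapos
  have hγ2 : γ^2 = m*n := by linarith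
  have hγpos : 0 < γ^2 := by positivity
  have hm : 0 < m := by
    rcases lt_or_eq_of_le hm6 with h' | h'
    · exact h'
    · exfalso; rw [← h'] at hγ2; simp at hγ2; exact hγ (by nlinarith [hγ2])
  have hn : 0 < n := by nlinarith [hγ2, hγpos, hm]
  obtain ⟨p, hp⟩ := Int.sq_of_isCoprime (Int.isCoprime_iff_gcd_eq_one.mpr hm4) hγ2.symm
  have hpm : m = p^2 := by
    rcases hp with h' | h'
    · exact h'
    · exfalso; nlinarith [sq_nonneg p, hm]
  obtain ⟨q, hq⟩ := Int.sq_of_isCoprime (Int.isCoprime_iff_gcd_eq_one.mpr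
    (Int.gcd_comm m n ▸ hm4)) (by linarith [hγ2] : n * m = γ^2)
  have hqn : n = q^2 := by
    rcases hq with h' | h'
    · exact h'
    · exfalso; nlinarith [sq_nonneg q, hn]
  refine ⟨p, q, δ, ?_, ?_, hδ0, ?_, ?_⟩
  · rintro rfl; simp at hpm; omega
  · rintro rfl; simp at hqn; omega
  · rw [hpm, hqn] at hm1
    linear_combination -hm1
  · have key : (p.natAbs:ℤ)^4 < (a.natAbs:ℤ) := by
      have h1 : ((p.natAbs:ℤ))^2 = p^2 := by
        rw [Int.natAbs_sq]  -- ?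
      nlinarith [hm3, hn, hpm, h1, Int.abs_eq_natAbs a]
    exact_mod_cast key


lemma natAbs_lt_of_sq_lt {s a : ℤ} (h : s^2 < a^2) : s.natAbs < a.natAbs := by
  by_contra hle
  push_neg at hle
  have h1 : (a.natAbs:ℤ) ≤ (s.natAbs:ℤ) := by exact_mod_cast hle
  have h2 : (s.natAbs:ℤ)^2 = s^2 := by rw [Int.natAbs_sq]
  have h3 : (a.natAbs:ℤ)^2 = a^2 := by rw [Int.natAbs_sq]
  nlinarith [h1, h2, h3, (by positivity : (0:ℤ) ≤ (a.natAbs:ℤ)), (by positivity : (0:ℤ) ≤ (s.natAbs:ℤ))]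

set_option maxHeartbeats 2000000 in
lemma lemB : ∀ n : ℕ, ∀ a b c : ℤ, a.natAbs = n → a ≠ 0 → b ≠ 0 → c ≠ 0 →
    a ^ 4 - b ^ 4 ≠ c ^ 2 := by
  intro n
  induction n using Nat.strong_induction_on with
  | _ n ih =>
  intro a b c hn ha hb hc heq
  -- basic positivity
  have hc2 : 0 < c^2 := by positivity
  have hsum : 0 < a^2 + b^2 := by positivity
  have hprod : 0 < (a^2 - b^2) * (a^2 + b^2) := by
    have h' : (a^2-b^2)*(a^2+b^2) = c^2 := by linear_combination heq
    rw [h']; exact hc2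
  have hdiff : 0 < a^2 - b^2 := by
    rcases mul_pos_iff.mp hprod with ⟨h1, _⟩ | ⟨_, h2⟩
    · exact h1
    · linarith
  -- reduce to the coprime case
  by_cases hg1 : Int.gcd a b = 1
  case neg =>
    set g : ℤ := (Int.gcd a b : ℤ) with hgdef
    have hg0 : g ≠ 0 := by
      simp [hgdef, Int.gcd_eq_zero_iff]
      intro h'; exact absurd h' ha
    have hg2 : 2 ≤ Int.gcd a b := by
      rcases Nat.lt_or_ge (Int.gcd a b) 2 with h' | h'
      · interval_cases h'' : (Int.gcd a b) <;> simp_all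
      · exact h'
    obtain ⟨a₁, ha₁⟩ : g ∣ a := Int.gcd_dvd_left a b
    obtain ⟨b₁, hb₁⟩ : g ∣ b := Int.gcd_dvd_right a b
    have hcsq : c^2 = (g^2)^2 * (a₁^4 - b₁^4) := by
      rw [ha₁, hb₁] at heq; linear_combination -heq
    have hgc : g^2 ∣ c := by
      rw [← Int.pow_dvd_pow_iff (two_ne_zero)]
      exact ⟨_, hcsq⟩
    obtain ⟨c₁, hc₁⟩ := hgc
    have heq₁ : a₁^4 - b₁^4 = c₁^2 := by
      have h4 : (g^2)^2 * (a₁^4 - b₁^4) = (g^2)^2 * c₁^2 := by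
        rw [← hcsq, hc₁]; ring
      exact mul_left_cancel₀ (by positivity) h4
    have ha₁0 : a₁ ≠ 0 := by rintro rfl; simp at ha₁; exact ha ha₁
    have hb₁0 : b₁ ≠ 0 := by rintro rfl; simp at hb₁; exact hb hb₁
    have hc₁0 : c₁ ≠ 0 := by rintro rfl; simp at hc₁; exact hc hc₁
    have hlt : a₁.natAbs < n := by
      rw [← hn, ha₁, Int.natAbs_mul]
      have h1 : 1 ≤ a₁.natAbs := Nat.one_le_iff_ne_zero.mpr (Int.natAbs_ne_zero.mpr ha₁0)
      have h2 : g.natAbs = Int.gcd a b := by simp [hgdef]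
      calc a₁.natAbs < 2 * a₁.natAbs := by omega
        _ ≤ g.natAbs * a₁.natAbs := by
            apply Nat.mul_le_mul_right; omega
    exact ih a₁.natAbs hlt a₁ b₁ c₁ rfl ha₁0 hb₁0 hc₁0 heq₁
  case pos =>
  have hcop : IsCoprime a b := Int.isCoprime_iff_gcd_eq_one.mpr hg1
  rcases Int.even_or_odd a with haev | haod
  · -- a even: contradiction mod 16
    have hbod : Odd b := by
      rcases Int.even_or_odd b with hbev | h'
      · exfalso
        obtain ⟨k, rfl⟩ := haev
        obtain ⟨l, rfl⟩ := hbev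
        have : IsUnit (2:ℤ) := hcop.isUnit_of_dvd' ⟨k, by ring⟩ ⟨l, by ring⟩
        rw [Int.isUnit_iff] at this
        omega
      · exact h'
    obtain ⟨k, rfl⟩ := haev
    obtain ⟨l, rfl⟩ := hbod
    have key : ∀ x y : ZMod 16, x^2 + (2*y+1)^4 ≠ 0 := by decide
    apply key (c : ZMod 16) (l : ZMod 16)
    have hz : ((c^2 + (2*l+1)^4 : ℤ) : ZMod 16) = ((16*k^4 : ℤ) : ZMod 16) := by
      congr 1
      linear_combination -heq
    push_cast at hz
    rw [hz]
    have h16 : (16 : ZMod 16) = 0 := by decide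
    rw [h16]; ring
  · -- a odd
    obtain ⟨k, hk⟩ := haod
    rcases Int.even_or_odd b with hbev | hbod
    · -- b even : reduce to delta^4 + 4 gamma^4 = a^2 and use auxD
      obtain ⟨l, rfl⟩ := hbev
      subst hk
      have hl0 : l ≠ 0 := by omega
      obtain ⟨X, hXdef⟩ : ∃ X:ℤ, X = (2*k+1)^2 - (l+l)^2 := ⟨_, rfl⟩
      obtain ⟨Y, hYdef⟩ : ∃ Y:ℤ, Y = (2*k+1)^2 + (l+l)^2 := ⟨_, rfl⟩
      have hXpos : 0 < X := by rw [hXdef]; linarith [hdiff]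
      have hYpos : 0 < Y := by rw [hYdef]; linarith [hsum]
      have hXodd : X % 2 = 1 := by
        have h' : X = 2*(2*k^2+2*k-2*l^2)+1 := by rw [hXdef]; ring
        omega
      have hYodd : Y % 2 = 1 := by
        have h' : Y = 2*(2*k^2+2*k+2*l^2)+1 := by rw [hYdef]; ring
        omega
      have hprodXY : X * Y = c^2 := by rw [hXdef, hYdef]; linear_combination heq
      obtain ⟨u, v, huv⟩ := hcop.pow (m := 2) (n := 2)
      have combo2 : (u-v)*X + (u+v)*Y = 2 := by
        rw [hXdef, hYdef]; linear_combination 2*huv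
      obtain ⟨e₁, f₁, hef⟩ := coprime_two_of_odd hXodd
      have hcXY : IsCoprime X Y :=
        ⟨e₁*(u-v)+f₁, e₁*(u+v), by linear_combination hef + e₁*combo2⟩
      obtain ⟨P₀, hP₀⟩ := Int.sq_of_isCoprime hcXY hprodXY
      have hXP₀ : X = P₀^2 := by
        rcases hP₀ with h' | h'
        · exact h'
        · exfalso; linarith [sq_nonneg P₀]
      obtain ⟨Q₀, hQ₀⟩ := Int.sq_of_isCoprime hcXY.symm
        (by linarith [hprodXY] : Y * X = c^2)
      have hYQ₀ : Y = Q₀^2 := by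
        rcases hQ₀ with h' | h'
        · exact h'
        · exfalso; linarith [sq_nonneg Q₀]
      obtain ⟨P, hP, hPpos⟩ : ∃ P:ℤ, X = P^2 ∧ 0 < P := by
        refine ⟨|P₀|, by rw [sq_abs]; exact hXP₀, abs_pos.mpr ?_⟩
        rintro rfl; rw [hXP₀] at hXpos; simp at hXpos
      obtain ⟨Q, hQ, hQpos⟩ : ∃ Q:ℤ, Y = Q^2 ∧ 0 < Q := by
        refine ⟨|Q₀|, by rw [sq_abs]; exact hYQ₀, abs_pos.mpr ?_⟩
        rintro rfl; rw [hYQ₀] at hYpos; simp at hYpos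
      have hXYlt : X < Y := by
        have hll : (0:ℤ) < (l+l)^2 := by
          rcases lt_trichotomy (l+l) 0 with h' | h' | h'
          · rw [sq]; exact mul_pos_of_neg_of_neg h' h'
          · exact absurd (by omega : l = 0) hl0
          · rw [sq]; exact mul_pos h' h' 
        rw [hXdef, hYdef]; linarith
      have hPQ : P < Q := by
        by_contra hle
        push_neg at hle
        have h' := pow_le_pow_left₀ hQpos.le hle 2
        rw [← hP, ← hQ] at h'
        linarith
      have hPodd : ∃ p₁, P = 2*p₁+1 := by
        rcases Int.even_or_odd P with ⟨m, hm⟩ | ⟨m, hm⟩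
        · exfalso
          have h' : X = 2*(2*m^2) := by rw [hP, hm]; ring
          omega
        · exact ⟨m, hm⟩
      have hQodd : ∃ q₁, Q = 2*q₁+1 := by
        rcases Int.even_or_odd Q with ⟨m, hm⟩ | ⟨m, hm⟩
        · exfalso
          have h' : Y = 2*(2*m^2) := by rw [hQ, hm]; ring
          omega
        · exact ⟨m, hm⟩
      obtain ⟨p₁, hP1⟩ := hPodd
      obtain ⟨q₁, hQ1⟩ := hQodd
      rw [hP1] at hP hPpos hPQ
      rw [hQ1] at hQ hQpos hPQ
      rw [hXdef] at hP
      rw [hYdef] at hQ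
      -- now hP : (2k+1)^2 - (l+l)^2 = (2p₁+1)^2, hQ : (2k+1)^2 + (l+l)^2 = (2q₁+1)^2
      obtain ⟨α, hαdef⟩ : ∃ α:ℤ, α = q₁ - p₁ := ⟨_, rfl⟩
      obtain ⟨β, hβdef⟩ : ∃ β:ℤ, β = q₁ + p₁ + 1 := ⟨_, rfl⟩
      have hαpos : 0 < α := by omega
      have hβpos : 0 < β := by omega
      have h4αβ : 4*(α*β) = 8*l^2 := by rw [hαdef, hβdef]; linear_combination hP - hQ
      have hαβ : α*β = 2*l^2 := by linarith
      have hcPQ : IsCoprime ((2*p₁+1) : ℤ) (2*q₁+1) := by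
        have h1 : IsCoprime (((2*p₁+1):ℤ)^2) ((2*q₁+1)^2) := by
          rw [← hP, ← hQ]
          rw [hXdef, hYdef] at hcXY
          exact hcXY
        exact (h1.of_isCoprime_of_dvd_left (dvd_pow_self _ two_ne_zero)).of_isCoprime_of_dvd_right
          (dvd_pow_self _ two_ne_zero)
      obtain ⟨u', v', hu'v'⟩ := hcPQ
      have hcαβ : IsCoprime α β := by
        refine ⟨v' - u', u' + v', ?_⟩
        rw [hαdef, hβdef]
        linear_combination hu'v'
      have hβδsplit : (∃ m, α = 2*m ∧ β % 2 = 1) ∨ (∃ m, β = 2*m ∧ α % 2 = 1) := by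
        rcases Int.even_or_odd α with ⟨m, hm⟩ | ⟨m, hm⟩
        · exact Or.inl ⟨m, by omega, by omega⟩
        · refine Or.inr ⟨(q₁+p₁+1)/2, by omega, by omega⟩
      have hsum2 : 2*(α^2 + β^2) = 2*(2*k+1)^2 := by
        rw [hαdef, hβdef]; linear_combination -hP - hQ
      rcases hβδsplit with ⟨m, hm, hβodd⟩ | ⟨m, hm, hαodd⟩
      · -- α = 2m even
        have hmβ : m * β = l^2 := by
          have h' : 2*(m*β) - 2*l^2 = 0 := by linear_combination hαβ - β*hm
          linarith
        have hcmβ : IsCoprime m β :=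
          hcαβ.of_isCoprime_of_dvd_left ⟨2, by omega⟩
        obtain ⟨γ, hγ'⟩ := Int.sq_of_isCoprime hcmβ hmβ
        have hmγ : m = γ^2 := by
          rcases hγ' with h' | h'
          · exact h'
          · exfalso; linarith [sq_nonneg γ]
        obtain ⟨δ, hδ'⟩ := Int.sq_of_isCoprime hcmβ.symm (by linarith [hmβ] : β * m = l^2)
        have hβδ : β = δ^2 := by
          rcases hδ' with h' | h'
          · exact h'
          · exfalso; linarith [sq_nonneg δ]
        have hδodd : δ % 2 = 1 := by
          rcases Int.even_or_odd δ with ⟨w, hw⟩ | ⟨w, hw⟩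
          · exfalso
            have h' : β = 2*(2*w^2) := by rw [hβδ, hw]; ring
            omega
          · omega
        have hγ0 : γ ≠ 0 := by rintro rfl; simp at hmγ; omega
        have hcδγ : IsCoprime δ γ := by
          have h1 : IsCoprime (γ^2) (δ^2) := by rw [← hmγ, ← hβδ]; exact hcmβ
          exact ((h1.of_isCoprime_of_dvd_left (dvd_pow_self _ two_ne_zero)).of_isCoprime_of_dvd_right
            (dvd_pow_self _ two_ne_zero)).symm
        have hβ2 : β^2 = δ^4 := by rw [hβδ]; ring
        have hα2 : α^2 = 4*γ^4 := by rw [hm, hmγ]; ring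
        have hfinal : δ^4 + 4*γ^4 = (2*k+1)^2 := by linarith [hβ2, hα2, hsum2]
        obtain ⟨p, q, e, hp0, hq0, he0, heqB, hsize⟩ := auxD (2*k+1) γ δ hcδγ hδodd hγ0 hfinal
        have hlt : p.natAbs < n := by
          rw [← hn]
          exact lt_of_le_of_lt (Nat.le_self_pow (by norm_num) _) hsize
        exact ih p.natAbs hlt p q e rfl hp0 hq0 he0 heqB
      · -- β = 2m even
        have hmα : m * α = l^2 := by
          have h' : 2*(m*α) - 2*l^2 = 0 := by linear_combination hαβ - α*hm
          linarith
        have hcmα : IsCoprime m α :=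
          (hcαβ.symm).of_isCoprime_of_dvd_left ⟨2, by omega⟩
        obtain ⟨γ, hγ'⟩ := Int.sq_of_isCoprime hcmα hmα
        have hmγ : m = γ^2 := by
          rcases hγ' with h' | h'
          · exact h'
          · exfalso; linarith [sq_nonneg γ]
        obtain ⟨δ, hδ'⟩ := Int.sq_of_isCoprime hcmα.symm (by linarith [hmα] : α * m = l^2)
        have hαδ : α = δ^2 := by
          rcases hδ' with h' | h'
          · exact h'
          · exfalso; linarith [sq_nonneg δ]
        have hδodd : δ % 2 = 1 := by
          rcases Int.even_or_odd δ with ⟨w, hw⟩ | ⟨w, hw⟩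
          · exfalso
            have h' : α = 2*(2*w^2) := by rw [hαδ, hw]; ring
            omega
          · omega
        have hγ0 : γ ≠ 0 := by rintro rfl; simp at hmγ; omega
        have hcδγ : IsCoprime δ γ := by
          have h1 : IsCoprime (γ^2) (δ^2) := by rw [← hmγ, ← hαδ]; exact hcmα
          exact ((h1.of_isCoprime_of_dvd_left (dvd_pow_self _ two_ne_zero)).of_isCoprime_of_dvd_right
            (dvd_pow_self _ two_ne_zero)).symm
        have hα2 : α^2 = δ^4 := by rw [hαδ]; ring
        have hβ2 : β^2 = 4*γ^4 := by rw [hm, hmγ]; ring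
        have hfinal : δ^4 + 4*γ^4 = (2*k+1)^2 := by linarith [hβ2, hα2, hsum2]
        obtain ⟨p, q, e, hp0, hq0, he0, heqB, hsize⟩ := auxD (2*k+1) γ δ hcδγ hδodd hγ0 hfinal
        have hlt : p.natAbs < n := by
          rw [← hn]
          exact lt_of_le_of_lt (Nat.le_self_pow (by norm_num) _) hsize
        exact ih p.natAbs hlt p q e rfl hp0 hq0 he0 heqB
    · -- b odd : descent within the difference equation
      obtain ⟨l, hl⟩ := hbod
      subst hk hl
      obtain ⟨x, hxdef⟩ : ∃ x:ℤ, x = 2*(k^2+k-l^2-l) := ⟨_, rfl⟩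
      obtain ⟨y, hydef⟩ : ∃ y:ℤ, y = 2*k^2+2*k+2*l^2+2*l+1 := ⟨_, rfl⟩
      have hx : (2*k+1)^2 - (2*l+1)^2 = 2*x := by rw [hxdef]; ring
      have hy : (2*k+1)^2 + (2*l+1)^2 = 2*y := by rw [hydef]; ring
      have hxyc : c^2 = (2*x)*(2*y) := by rw [hxdef, hydef]; linear_combination -heq
      have h2c : (2:ℤ) ∣ c^2 := ⟨2*(x*y), by linarith [hxyc]⟩
      have hce : ((2:ℕ):ℤ) ∣ c :=
        Int.Prime.dvd_pow' (n := c) (k := 2) Nat.prime_two (by exact_mod_cast h2c)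
      obtain ⟨c₂, rfl⟩ := (by exact_mod_cast hce : (2:ℤ) ∣ c)
      have hc₂ : x * y = c₂^2 := by linarith [hxyc, sq_nonneg c₂, (by ring : (2*c₂)^2 = 4*c₂^2)]
      have ha2 : (2*k+1)^2 = x + y := by linarith [hx, hy]
      have hb2 : (2*l+1)^2 = y - x := by linarith [hx, hy]
      obtain ⟨u, v, huv⟩ := hcop.pow (m := 2) (n := 2)
      have hcxy : IsCoprime x y := by
        refine ⟨u - v, u + v, ?_⟩
        linear_combination huv - u*ha2 - v*hb2
      have hxpos : 0 < x := by linarith [hdiff, hx]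
      have hypos : 0 < y := by linarith [hsum, hy]
      obtain ⟨r, hr⟩ := Int.sq_of_isCoprime hcxy hc₂
      have hxr : x = r^2 := by
        rcases hr with h' | h'
        · exact h'
        · exfalso; linarith [sq_nonneg r]
      obtain ⟨s, hs⟩ := Int.sq_of_isCoprime hcxy.symm (by linarith [hc₂] : y * x = c₂^2)
      have hys : y = s^2 := by
        rcases hs with h' | h'
        · exact h'
        · exfalso; linarith [sq_nonneg s]
      have hs0 : s ≠ 0 := by
        rintro rfl
        have hy0 : y = 0 := by rw [hys]; ring
        linarith
      have hr0 : r ≠ 0 := by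
        rintro rfl
        have hx0 : x = 0 := by rw [hxr]; ring
        linarith
      rw [hxr] at ha2 hb2
      rw [hys] at ha2 hb2
      have heqnew : s^4 - r^4 = ((2*k+1)*(2*l+1))^2 := by
        linear_combination (-((2*l+1)^2))*ha2 - (r^2+s^2)*hb2
      have hlt : s.natAbs < n := by
        rw [← hn]
        apply natAbs_lt_of_sq_lt
        linarith [hys, hy, hdiff]
      exact ih s.natAbs hlt s r ((2*k+1)*(2*l+1)) rfl hs0 hr0 (mul_ne_zero ha hb) heqnew

lemma lemC (c u z : ℤ) (hc : c ≠ 0) (hu : u ≠ 0) : c^4 + 4*u^4 ≠ z^2 := by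
  intro heq
  have hgpos : 0 < Int.gcd c u := by
    rcases Nat.eq_zero_or_pos (Int.gcd c u) with h' | h'
    · exact absurd (Int.gcd_eq_zero_iff.mp h').1 hc
    · exact h'
  set g : ℤ := (Int.gcd c u : ℤ) with hgdef
  have hg0 : g ≠ 0 := by
    simp only [hgdef, ne_eq, Int.natCast_eq_zero]
    omega
  obtain ⟨c₁, hc₁⟩ : g ∣ c := Int.gcd_dvd_left c u
  obtain ⟨u₁, hu₁⟩ : g ∣ u := Int.gcd_dvd_right c u
  have hc₁0 : c₁ ≠ 0 := by rintro rfl; simp at hc₁; exact hc hc₁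
  have hu₁0 : u₁ ≠ 0 := by rintro rfl; simp at hu₁; exact hu hu₁
  have hcop : IsCoprime c₁ u₁ := by
    have h1 : Int.gcd (c / g) (u / g) = 1 := Int.gcd_div_gcd_div_gcd hgpos
    have h2 : c / g = c₁ := by rw [hc₁]; exact Int.mul_ediv_cancel_left c₁ hg0
    have h3 : u / g = u₁ := by rw [hu₁]; exact Int.mul_ediv_cancel_left u₁ hg0
    rw [h2, h3] at h1
    exact Int.isCoprime_iff_gcd_eq_one.mpr h1
  have hz2 : z^2 = (g^2)^2 * (c₁^4 + 4*u₁^4) := by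
    rw [hc₁, hu₁] at heq; linear_combination -heq
  have hgz : g^2 ∣ z := by rw [← Int.pow_dvd_pow_iff two_ne_zero]; exact ⟨_, hz2⟩
  obtain ⟨z₁, rfl⟩ := hgz
  have heq₁ : c₁^4 + 4*u₁^4 = z₁^2 := by
    have h4 : (g^2)^2 * (c₁^4+4*u₁^4) = (g^2)^2 * z₁^2 := by rw [← hz2]; ring
    exact mul_left_cancel₀ (by positivity) h4
  rcases Int.even_or_odd c₁ with ⟨w, hw⟩ | ⟨w, hw⟩
  · -- c₁ even, u₁ odd
    have hu₁odd : u₁ % 2 = 1 := by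
      rcases Int.even_or_odd u₁ with ⟨t, ht⟩ | ⟨t, ht⟩
      · exfalso
        have hunit : IsUnit (2:ℤ) := hcop.isUnit_of_dvd' ⟨w, by omega⟩ ⟨t, by omega⟩
        rw [Int.isUnit_iff] at hunit
        omega
      · omega
    have hw0 : w ≠ 0 := by rintro rfl; omega
    have h2z : (2:ℤ) ∣ z₁^2 := ⟨8*w^4 + 2*u₁^4, by rw [hw] at heq₁; linear_combination -heq₁⟩
    have hz₁e := Int.Prime.dvd_pow' (n := z₁) (k := 2) Nat.prime_two (by exact_mod_cast h2z)
    obtain ⟨z₂, hz₂⟩ : (2:ℤ) ∣ z₁ := by exact_mod_cast hz₁e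
    have heq₂ : u₁^4 + 4*w^4 = z₂^2 := by
      have h4 : 4*(u₁^4 + 4*w^4) = 4*z₂^2 := by
        rw [hw, hz₂] at heq₁; linear_combination heq₁
      linarith
    have hcop2 : IsCoprime u₁ w := hcop.symm.of_isCoprime_of_dvd_right ⟨2, by omega⟩
    obtain ⟨p, q, e, hp0, hq0, he0, heqB, _⟩ := auxD z₂ w u₁ hcop2 hu₁odd hw0 heq₂
    exact lemB p.natAbs p q e rfl hp0 hq0 he0 heqB
  · -- c₁ odd
    have hc₁odd : c₁ % 2 = 1 := by omega
    obtain ⟨p, q, e, hp0, hq0, he0, heqB, _⟩ := auxD z₁ u₁ c₁ hcop hc₁odd hu₁0 heq₁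
    exact lemB p.natAbs p q e rfl hp0 hq0 he0 heqB


lemma smul_fin_two' (k a b c d : ℤ) : k • !![a,b;c,d] = !![k*a,k*b;k*c,k*d] := by
  ext i j; fin_cases i <;> fin_cases j <;> simp

lemma pow_two_fin_two (a b c d : ℤ) :
    !![a,b;c,d] ^ 2 = !![a*a+b*c, a*b+b*d; c*a+d*c, c*b+d*d] := by
  rw [pow_two, Matrix.mul_fin_two]

lemma add_fin_two' (a b c d a' b' c' d' : ℤ) :
    !![a,b;c,d] + !![a',b';c',d'] = !![a+a',b+b';c+c',d+d'] := by
  ext i j; fin_cases i <;> fin_cases j <;> simp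

lemma pow_four_fin_two (a b c d : ℤ) :
    !![a,b;c,d] ^ 4 = ((a+d)^3 - 2*(a+d)*(a*d-b*c)) • !![a,b;c,d]
      + ((a*d-b*c)^2 - (a+d)^2*(a*d-b*c)) • (1 : Matrix (Fin 2) (Fin 2) ℤ) := by
  have h : !![a,b;c,d] ^ 4 = (!![a,b;c,d] ^ 2) ^ 2 := by rw [← pow_mul]
  rw [h, pow_two_fin_two, pow_two_fin_two, Matrix.one_fin_two, smul_fin_two',
    smul_fin_two', add_fin_two']
  congr 1 <;> ring

lemma pow_four_traceless (p q r : ℤ) :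
    !![p,q;r,-p] ^ 4 = ((p^2 + q*r)^2) • (1 : Matrix (Fin 2) (Fin 2) ℤ) := by
  have h : !![p,q;r,-p] ^ 4 = (!![p,q;r,-p] ^ 2) ^ 2 := by rw [← pow_mul]
  rw [h, pow_two_fin_two, pow_two_fin_two, Matrix.one_fin_two, smul_fin_two']
  congr 1 <;> ring


-- cancellation lemma
lemma coeff_zero₁ (α β γ δ : ℤ) (M N : Matrix (Fin 2) (Fin 2) ℤ)
    (h : α • M + β • N + δ • (1 : Matrix (Fin 2) (Fin 2) ℤ)
        = γ • (1 : Matrix (Fin 2) (Fin 2) ℤ)) (hne : M * N ≠ N * M) :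
    α = 0 := by
  by_contra hα
  apply hne
  have h1 : α • M = (γ - δ) • (1 : Matrix (Fin 2) (Fin 2) ℤ) - β • N := by
    rw [sub_smul, ← h]; abel
  have key : α • (M * N) = α • (N * M) := by
    calc α • (M * N) = (α • M) * N := (smul_mul_assoc α M N).symm
      _ = ((γ - δ) • (1 : Matrix (Fin 2) (Fin 2) ℤ) - β • N) * N := by rw [h1]
      _ = (γ - δ) • N - β • (N * N) := by
          rw [sub_mul, smul_mul_assoc, smul_mul_assoc, one_mul]
      _ = N * ((γ - δ) • (1 : Matrix (Fin 2) (Fin 2) ℤ) - β • N) := by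
          rw [mul_sub, mul_smul_comm, mul_smul_comm, mul_one]
      _ = N * (α • M) := by rw [h1]
      _ = α • (N * M) := mul_smul_comm α N M
  ext i j
  have := congrFun (congrFun key i) j
  simp only [Matrix.smul_apply, smul_eq_mul] at this
  exact mul_left_cancel₀ hα this


lemma li_of_not_cross (t₁ t₂ t₃ s₁ s₂ s₃ : ℤ)
    (h : ¬(t₂*s₃ = t₃*s₂ ∧ t₁*s₂ = t₂*s₁ ∧ t₃*s₁ = t₁*s₃)) :
    LinearIndependent ℚ ![![(t₁:ℚ), t₂, t₃], ![(s₁:ℚ), s₂, s₃]] := by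
  rw [linearIndependent_fin2]
  constructor
  · intro h0
    apply h
    have h1 : (s₁:ℚ) = 0 := by have := congrFun h0 0; simpa using this
    have h2 : (s₂:ℚ) = 0 := by have := congrFun h0 1; simpa using this
    have h3 : (s₃:ℚ) = 0 := by have := congrFun h0 2; simpa using this
    have e1 : s₁ = 0 := by exact_mod_cast h1
    have e2 : s₂ = 0 := by exact_mod_cast h2
    have e3 : s₃ = 0 := by exact_mod_cast h3
    subst e1 e2 e3; simp
  · intro q hq
    apply h
    have h1 : q * (s₁:ℚ) = t₁ := by have := congrFun hq 0; simpa using this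
    have h2 : q * (s₂:ℚ) = t₂ := by have := congrFun hq 1; simpa using this
    have h3 : q * (s₃:ℚ) = t₃ := by have := congrFun hq 2; simpa using this
    refine ⟨?_, ?_, ?_⟩
    · have : ((t₂*s₃ : ℤ) : ℚ) = ((t₃*s₂ : ℤ) : ℚ) := by
        push_cast; rw [← h2, ← h3]; ring
      exact_mod_cast this
    · have : ((t₁*s₂ : ℤ) : ℚ) = ((t₂*s₁ : ℤ) : ℚ) := by
        push_cast; rw [← h1, ← h2]; ring
      exact_mod_cast this
    · have : ((t₃*s₁ : ℤ) : ℚ) = ((t₁*s₃ : ℤ) : ℚ) := by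
        push_cast; rw [← h1, ← h3]; ring
      exact_mod_cast this

lemma cross_of_not_li (t₁ t₂ t₃ s₁ s₂ s₃ : ℤ)
    (h : LinearIndependent ℚ ![![(t₁:ℚ), t₂, t₃], ![(s₁:ℚ), s₂, s₃]]) :
    ¬(t₂*s₃ = t₃*s₂ ∧ t₁*s₂ = t₂*s₁ ∧ t₃*s₁ = t₁*s₃) := by
  rintro ⟨c1, c2, c3⟩
  rw [linearIndependent_fin2] at h
  obtain ⟨hw, hq⟩ := h
  have q1 : (t₁:ℚ) * s₂ = t₂ * s₁ := by exact_mod_cast c2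
  have q2 : (t₂:ℚ) * s₃ = t₃ * s₂ := by exact_mod_cast c1
  have q3 : (t₃:ℚ) * s₁ = t₁ * s₃ := by exact_mod_cast c3
  by_cases he : (s₁ : ℚ) ≠ 0
  · apply hq ((t₁:ℚ)/s₁)
    funext i
    fin_cases i <;> simp <;> field_simp <;> linarith [q1, q2, q3]
  · push_neg at he
    by_cases hf : (s₂ : ℚ) ≠ 0
    · apply hq ((t₂:ℚ)/s₂)
      have ht1 : (t₁:ℚ) = 0 := by
        have h0 : (t₁:ℚ) * s₂ = 0 := by rw [q1, he]; ring
        rcases mul_eq_zero.mp h0 with h' | h'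
        · exact h'
        · exact absurd h' hf
      funext i
      fin_cases i <;> simp [he, ht1] <;> field_simp <;> linarith [q1, q2, q3]
    · push_neg at hf
      by_cases hg : (s₃ : ℚ) ≠ 0
      · apply hq ((t₃:ℚ)/s₃)
        have ht1 : (t₁:ℚ) = 0 := by
          have h0 : (t₁:ℚ) * s₃ = 0 := by rw [← q3, he]; ring
          rcases mul_eq_zero.mp h0 with h' | h'
          · exact h'
          · exact absurd h' hg
        have ht2 : (t₂:ℚ) = 0 := by
          have h0 : (t₂:ℚ) * s₃ = 0 := by rw [q2, hf]; ring
          rcases mul_eq_zero.mp h0 with h' | h'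
          · exact h'
          · exact absurd h' hg
        funext i
        fin_cases i <;> simp [he, hf, ht1, ht2] <;> field_simp <;> linarith [q1, q2, q3]
      · push_neg at hg
        apply hw
        funext i
        fin_cases i <;> simp [he, hf, hg]

lemma comm_of_cross (a b c' e f g : ℤ) (h1 : b*g = c'*f) (h2 : a*f = b*e) (h3 : c'*e = a*g) :
    !![a,b;c',-a] * !![e,f;g,-e] = !![e,f;g,-e] * !![a,b;c',-a] := by
  have e11 : a*e + b*g = e*a + f*c' := by linear_combination h1
  have e12 : a*f + b*(-e) = e*b + f*(-a) := by linear_combination 2*h2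
  have e21 : c'*e + (-a)*g = g*a + (-e)*c' := by linear_combination 2*h3
  have e22 : c'*f + (-a)*(-e) = g*b + (-e)*(-a) := by linear_combination -h1
  rw [Matrix.mul_fin_two, Matrix.mul_fin_two, e11, e12, e21, e22]

theorem stmt_5 (c : ℤ) (hc : c ≠ 0) (X Y : Matrix (Fin 2) (Fin 2) ℤ) :
    (X ^ 4 + Y ^ 4 = c ^ 4 • (1 : Matrix (Fin 2) (Fin 2) ℤ) ∧ X * Y ≠ Y * X) ↔
    (∃ t₁ t₂ t₃ s₁ s₂ s₃ : ℤ,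
      X = !![t₁, t₂; t₃, -t₁] ∧ Y = !![s₁, s₂; s₃, -s₁] ∧
      (t₁ ^ 2 + t₂ * t₃) ^ 2 + (s₁ ^ 2 + s₂ * s₃) ^ 2 = c ^ 4 ∧
      LinearIndependent ℚ
        ![![(t₁ : ℚ), (t₂ : ℚ), (t₃ : ℚ)], ![(s₁ : ℚ), (s₂ : ℚ), (s₃ : ℚ)]]) := by
  have hc4 : 0 < c ^ 4 := by positivity
  constructor
  · rintro ⟨heq, hne⟩
    obtain ⟨a, b, c', d, hX⟩ : ∃ a b c' d, X = !![a,b;c',d] :=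
      ⟨_, _, _, _, Matrix.eta_fin_two X⟩
    obtain ⟨e, f, g, h, hY⟩ : ∃ e f g h, Y = !![e,f;g,h] :=
      ⟨_, _, _, _, Matrix.eta_fin_two Y⟩
    subst hX hY
    rw [pow_four_fin_two, pow_four_fin_two] at heq
    set α := (a+d)^3 - 2*(a+d)*(a*d-b*c') with hαdef
    set β := (e+h)^3 - 2*(e+h)*(e*h-f*g) with hβdef
    set k := (a*d-b*c')^2 - (a+d)^2*(a*d-b*c') with hkdef
    set k' := (e*h-f*g)^2 - (e+h)^2*(e*h-f*g) with hk'def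
    have hrearr : α • !![a,b;c',d] + β • !![e,f;g,h] + (k + k') • (1 : Matrix (Fin 2) (Fin 2) ℤ)
        = c ^ 4 • (1 : Matrix (Fin 2) (Fin 2) ℤ) := by
      rw [← heq, add_smul]; abel
    have hα : α = 0 := coeff_zero₁ α β _ _ _ _ hrearr hne
    have hβ : β = 0 := by
      refine coeff_zero₁ β α (c^4) (k+k') !![e,f;g,h] !![a,b;c',d] ?_ (fun hh => hne hh.symm)
      rw [← hrearr]; abel
    have hscal : k + k' = c ^ 4 := by
      rw [hα, hβ] at hrearr
      have h00 := congrFun (congrFun hrearr 0) 0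
      simpa only [Matrix.add_apply, Matrix.smul_apply, Matrix.one_apply_eq, smul_eq_mul,
        mul_one, zero_mul, zero_add] using h00
    -- show traces are zero
    have htr : a + d = 0 := by
      by_contra ht
      have ht2 : (a+d)^2 = 2*(a*d-b*c') := by
        have : (a+d) * ((a+d)^2 - 2*(a*d-b*c')) = 0 := by linear_combination hα
        rcases mul_eq_zero.mp this with h' | h'
        · exact absurd h' ht
        · linarith
      rcases eq_or_ne (e+h) 0 with hs | hs
      · -- s = 0 case : descent equation
        have hk'2 : k' = (e*h-f*g)^2 := by rw [hk'def, hs]; ring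
        have heven : (2:ℤ) ∣ (a+d) := by
          have h2 : (2:ℤ) ∣ (a+d)^2 := ⟨_, ht2⟩
          exact Int.Prime.dvd_pow' Nat.prime_two h2
        obtain ⟨u, hu⟩ := heven
        have hu0 : u ≠ 0 := by rintro rfl; simp at hu; exact ht hu
        have hdX : a*d - b*c' = 2*u^2 := by
          have h4 : (2*u)^2 = 2*(a*d-b*c') := hu ▸ ht2
          nlinarith [h4]
        have hfin : c^4 + 4*u^4 = (e*h-f*g)^2 := by
          rw [hkdef, hk'2, hu, hdX] at hscal
          linear_combination -hscal
        exact lemC c u _ hc hu0 hfin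
      · -- both nonzero : sum of two negatives positive
        have hs2 : (e+h)^2 = 2*(e*h-f*g) := by
          have : (e+h) * ((e+h)^2 - 2*(e*h-f*g)) = 0 := by linear_combination hβ
          rcases mul_eq_zero.mp this with h' | h'
          · exact absurd h' hs
          · linarith
        have hk2 : k = -(a*d-b*c')^2 := by
          rw [hkdef]; linear_combination (-(a*d-b*c'))*ht2
        have hk'2 : k' = -(e*h-f*g)^2 := by
          rw [hk'def]; linear_combination (-(e*h-f*g))*hs2
        rw [hk2, hk'2] at hscal
        nlinarith [hscal, sq_nonneg (a*d-b*c'), sq_nonneg (e*h-f*g), hc4]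
    have hstr : e + h = 0 := by
      by_contra hs
      have hs2 : (e+h)^2 = 2*(e*h-f*g) := by
        have : (e+h) * ((e+h)^2 - 2*(e*h-f*g)) = 0 := by linear_combination hβ
        rcases mul_eq_zero.mp this with h' | h'
        · exact absurd h' hs
        · linarith
      have hk2 : k = (a*d-b*c')^2 := by rw [hkdef, htr]; ring
      have heven : (2:ℤ) ∣ (e+h) := by
        have h2 : (2:ℤ) ∣ (e+h)^2 := ⟨_, hs2⟩
        exact Int.Prime.dvd_pow' Nat.prime_two h2
      obtain ⟨u, hu⟩ := heven
      have hu0 : u ≠ 0 := by rintro rfl; simp at hu; exact hs hu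
      have hdY : e*h - f*g = 2*u^2 := by
        have h4 : (2*u)^2 = 2*(e*h-f*g) := hu ▸ hs2
        nlinarith [h4]
      have hfin : c^4 + 4*u^4 = (a*d-b*c')^2 := by
        rw [hk'def, hk2, hu, hdY] at hscal
        linear_combination -hscal
      exact lemC c u _ hc hu0 hfin
    have hd : d = -a := by omega
    have hh : h = -e := by omega
    subst hd hh
    refine ⟨a, b, c', e, f, g, rfl, rfl, ?_, ?_⟩
    · rw [hkdef, hk'def] at hscal
      linear_combination hscal
    · apply li_of_not_cross
      rintro ⟨h1, h2, h3⟩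
      exact hne (comm_of_cross a b c' e f g h1 h2 h3)
  · rintro ⟨t₁, t₂, t₃, s₁, s₂, s₃, rfl, rfl, heq, hli⟩
    refine ⟨?_, ?_⟩
    · rw [pow_four_traceless, pow_four_traceless, ← add_smul, heq]
    · intro hcomm
      apply cross_of_not_li t₁ t₂ t₃ s₁ s₂ s₃ hli
      rw [Matrix.mul_fin_two, Matrix.mul_fin_two] at hcomm
      have h00 := congrFun (congrFun hcomm 0) 0
      have h01 := congrFun (congrFun hcomm 0) 1
      have h10 := congrFun (congrFun hcomm 1) 0
      simp at h00 h01 h10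
      refine ⟨by linarith, by linarith, by linarith⟩
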